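/- arXiv:1603.07170 — 3 statements merged into one kernel-verified Lean document; each statement's English description precedes it below -/
import Mathlib

section
/- For a convex function f : [a,b] → ℝ with a < b, the average of f over [a,b] is at most (1/2)·(f((a+b)/2) + (f(a)+f(b))/2). -/
open MeasureTheory

lemma chord_bound (a b c d : ℝ) (hcd : c < d) (hc : c ∈ Set.Icc a b)
    (hd : d ∈ Set.Icc a b) (f : ℝ → ℝ) (hf : ConvexOn ℝ (Set.Icc a b) f)
    (hint : IntervalIntegrable f volume c d) :
    ∫ t in c..d, f t ≤ (d - c) * (f c + f d) / 2 := by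
  have hdc : (0:ℝ) < d - c := by linarith
  set g : ℝ → ℝ := fun t => ((d - t) * f c + (t - c) * f d) / (d - c) with hg
  have hgcont : Continuous g := by continuity
  have hne : d - c ≠ 0 := hdc.ne'
  have hgle : ∀ t ∈ Set.Icc c d, f t ≤ g t := by
    intro t ht
    obtain ⟨ht1, ht2⟩ := ht
    have key := hf.2 hc hd (div_nonneg (by linarith) hdc.le)
      (div_nonneg (by linarith : (0:ℝ) ≤ t - c) hdc.le)
      (show (d - t)/(d - c) + (t - c)/(d - c) = 1 by field_simp; ring)
    have hco : ((d - t)/(d - c)) • c + ((t - c)/(d - c)) • d = t := by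
      simp only [smul_eq_mul]; field_simp; ring
    rw [hco] at key
    simp only [smul_eq_mul] at key
    calc f t ≤ (d - t)/(d - c) * f c + (t - c)/(d - c) * f d := key
      _ = g t := by rw [hg]; ring
  have hmono : ∫ t in c..d, f t ≤ ∫ t in c..d, g t :=
    intervalIntegral.integral_mono_on hcd.le hint
      (hgcont.intervalIntegrable c d) hgle
  have hgval : ∫ t in c..d, g t = (d - c) * (f c + f d) / 2 := by
    have : ∀ t, g t = (f d - f c)/(d - c) * t + (d * f c - c * f d)/(d - c) := by
      intro t; rw [hg]; ring
    simp only [this]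
    rw [intervalIntegral.integral_add ((_root_.intervalIntegral.intervalIntegrable_id).const_mul _)
      intervalIntegrable_const]
    rw [_root_.intervalIntegral.integral_const_mul, integral_id,
      _root_.intervalIntegral.integral_const]
    simp only [smul_eq_mul]
    field_simp
    ring
  linarith [hmono, hgval.le]

theorem hermite_hadamard_right_strong (a b : ℝ) (hab : a < b) (f : ℝ → ℝ)
    (hf : ConvexOn ℝ (Set.Icc a b) f)
    (hint : IntegrableOn f (Set.Icc a b)) :
    (1 / (b - a)) * ∫ t in a..b, f t ≤
      (1 / 2) * (f ((a + b) / 2) + (f a + f b) / 2) := by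
  set m := (a + b) / 2 with hm
  have hba : (0:ℝ) < b - a := by linarith
  have ham : a < m := by rw [hm]; linarith
  have hmb : m < b := by rw [hm]; linarith
  have hmem : m ∈ Set.Icc a b := ⟨ham.le, hmb.le⟩
  have ha : a ∈ Set.Icc a b := Set.left_mem_Icc.2 hab.le
  have hb : b ∈ Set.Icc a b := Set.right_mem_Icc.2 hab.le
  have hint1 : IntervalIntegrable f volume a m := by
    rw [intervalIntegrable_iff_integrableOn_Icc_of_le ham.le]
    exact hint.mono_set (Set.Icc_subset_Icc le_rfl hmb.le)
  have hint2 : IntervalIntegrable f volume m b := by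
    rw [intervalIntegrable_iff_integrableOn_Icc_of_le hmb.le]
    exact hint.mono_set (Set.Icc_subset_Icc ham.le le_rfl)
  have hsplit : ∫ t in a..b, f t = (∫ t in a..m, f t) + ∫ t in m..b, f t :=
    (intervalIntegral.integral_add_adjacent_intervals hint1 hint2).symm
  have h1 := chord_bound a b a m ham ha hmem f hf hint1
  have h2 := chord_bound a b m b hmb hmem hb f hf hint2
  have hI : ∫ t in a..b, f t ≤ (b - a) * ((1/2) * (f m + (f a + f b)/2)) := by
    rw [hsplit, hm] at *
    nlinarith [h1, h2]
  rw [mul_comm, ← div_le_iff₀ hba] at hI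
  calc (1 / (b - a)) * ∫ t in a..b, f t = (∫ t in a..b, f t) / (b - a) := by ring
    _ ≤ _ := hI
end

section
/- Let Δ ⊂ ℝⁿ be an n-simplex with vertices x₀,…,xₙ and barycenter b. If f : Δ → ℝ is convex, then f(b) ≤ (1/Vol Δ)·∫_Δ f ≤ (f(x₀)+⋯+f(xₙ))/(n+1). -/
open MeasureTheory Finset

theorem hermite_hadamard_simplex (n : ℕ)
    (x : Fin (n + 1) → EuclideanSpace ℝ (Fin n))
    (hx : AffineIndependent ℝ x)
    (f : EuclideanSpace ℝ (Fin n) → ℝ)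
    (hf : ConvexOn ℝ (convexHull ℝ (Set.range x)) f)
    (hint : IntegrableOn f (convexHull ℝ (Set.range x))) :
    f (((n : ℝ) + 1)⁻¹ • ∑ i, x i) ≤ ⨍ y in convexHull ℝ (Set.range x), f y ∧
      ⨍ y in convexHull ℝ (Set.range x), f y ≤ (∑ i, f (x i)) / ((n : ℝ) + 1) := by
  have htop : affineSpan ℝ (Set.range x) = ⊤ := by
    rw [hx.affineSpan_eq_top_iff_card_eq_finrank_add_one]
    simp [finrank_euclideanSpace_fin]
  set B : AffineBasis (Fin (n+1)) ℝ (EuclideanSpace ℝ (Fin n)) := ⟨x, hx, htop⟩ with hB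
  set s : Set (EuclideanSpace ℝ (Fin n)) := convexHull ℝ (Set.range x) with hs
  have hs_compact : IsCompact s := (Set.finite_range x).isCompact_convexHull ℝ
  have hs_meas : MeasurableSet s := hs_compact.isClosed.measurableSet
  have hμs_ne_top : volume s ≠ ⊤ := hs_compact.measure_lt_top.ne
  have hμs_pos : 0 < volume s :=
    Measure.measure_pos_of_nonempty_interior _ ⟨_, B.centroid_mem_interior_convexHull⟩
  set T : Equiv.Perm (Fin (n+1)) → (EuclideanSpace ℝ (Fin n) →ᵃ[ℝ] EuclideanSpace ℝ (Fin n)) :=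
    fun σ => (Finset.univ.affineCombination ℝ (x ∘ σ)).comp B.coords with hT
  have hsum1 : ∀ (σ : Equiv.Perm (Fin (n+1))) (y : EuclideanSpace ℝ (Fin n)),
      ∑ i, B.coords y (σ⁻¹ i) = 1 := by
    intro σ y
    rw [Equiv.sum_comp σ⁻¹ (B.coords y)]
    exact B.sum_coord_apply_eq_one y
  have hT_eq : ∀ σ y, T σ y = Finset.univ.affineCombination ℝ x (B.coords y ∘ ⇑σ⁻¹) := by
    intro σ y
    have h := Finset.affineCombination_map (k := ℝ) Finset.univ σ.toEmbedding
      (B.coords y ∘ ⇑σ⁻¹) x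
    rw [Finset.univ_map_equiv_to_embedding] at h
    have h2 : (B.coords y ∘ ⇑σ⁻¹) ∘ ⇑σ.toEmbedding = B.coords y := by
      funext i; simp
    rw [h2] at h
    simpa [hT, AffineMap.comp_apply] using h.symm
  have hcoordT : ∀ σ y i, B.coord i (T σ y) = B.coords y (σ⁻¹ i) := by
    intro σ y i
    rw [hT_eq σ y]
    exact B.coord_apply_combination_of_mem (Finset.mem_univ i) (hsum1 σ y)
  have hTx : ∀ σ j, T σ (x j) = x (σ j) := by
    intro σ j
    rw [hT_eq]
    refine Finset.affineCombination_of_eq_one_of_eq_zero _ _ _ (Finset.mem_univ (σ j)) ?_ ?_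
    · simp only [Function.comp_apply, ← Equiv.Perm.mul_apply, inv_mul_cancel, Equiv.Perm.one_apply, AffineBasis.coords_apply]
      exact B.coord_apply_eq j
    · intro i _ hi
      have : σ⁻¹ i ≠ j := fun h => hi (by simp [← h])
      simp only [Function.comp_apply, AffineBasis.coords_apply]
      exact B.coord_apply_ne this
  have hTs : ∀ σ, ⇑(T σ) '' s = s := by
    intro σ
    rw [hs, AffineMap.image_convexHull]
    congr 1
    rw [← Set.range_comp]
    have h1 : ⇑(T σ) ∘ x = x ∘ ⇑σ := funext fun j => hTx σ j
    rw [h1, Set.range_comp, σ.surjective.range_eq, Set.image_univ]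
  have hTinv : ∀ σ y, T σ⁻¹ (T σ y) = y := by
    intro σ y
    apply B.ext_elem
    intro i
    rw [hcoordT σ⁻¹ _ i]
    rw [AffineBasis.coords_apply, hcoordT σ y]
    simp [AffineBasis.coords_apply]
  have hTcont : ∀ σ, Continuous ⇑(T σ) := fun σ => (T σ).continuous_of_finiteDimensional
  have hTpre : ∀ σ, ⇑(T σ) ⁻¹' s = s := by
    intro σ
    ext y
    constructor
    · intro hy
      have : T σ⁻¹ (T σ y) ∈ ⇑(T σ⁻¹) '' s := Set.mem_image_of_mem _ hy
      rw [hTinv σ y, hTs σ⁻¹] at this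
      exact this
    · intro hy
      have : T σ y ∈ ⇑(T σ) '' s := Set.mem_image_of_mem _ hy
      rw [hTs σ] at this
      exact this
  have hmap : ∀ σ, Measure.map (⇑(T σ)) (volume : Measure (EuclideanSpace ℝ (Fin n))) = volume := by
    intro σ
    have hcompAff : (T σ).comp (T σ⁻¹) = AffineMap.id ℝ _ := by
      apply AffineMap.ext
      intro y
      have := hTinv σ⁻¹ y
      simpa using this
    have hlin : (T σ).linear.comp (T σ⁻¹).linear = LinearMap.id := by
      have := congrArg AffineMap.linear hcompAff
      simpa using this
    have hdet : LinearMap.det (T σ).linear ≠ 0 := by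
      intro h
      have := congrArg LinearMap.det hlin
      rw [LinearMap.det_comp, h, zero_mul, LinearMap.det_id] at this
      exact zero_ne_one this
    have hfun : ⇑(T σ) = (fun v => v + (T σ) 0) ∘ ⇑(T σ).linear := by
      funext y
      simpa using congrFun (AffineMap.decomp (T σ)) y
    have hmm : Measure.map (⇑(T σ)) volume
        = ENNReal.ofReal |(LinearMap.det (T σ).linear)⁻¹| • volume := by
      rw [hfun, ← Measure.map_map (measurable_add_const _) (T σ).linear.continuous_of_finiteDimensional.measurable]
      rw [Measure.map_linearMap_addHaar_eq_smul_addHaar _ hdet, Measure.map_smul,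
        map_add_right_eq_self volume ((T σ) 0)]
    have happ : (Measure.map (⇑(T σ)) volume) s = volume s := by
      rw [Measure.map_apply (hTcont σ).measurable hs_meas, hTpre σ]
    rw [hmm] at happ ⊢
    have hone : ENNReal.ofReal |(LinearMap.det (T σ).linear)⁻¹| = 1 := by
      have h2 : ENNReal.ofReal |(LinearMap.det (T σ).linear)⁻¹| * volume s = 1 * volume s := by
        simpa [Measure.smul_apply, smul_eq_mul] using happ
      exact (ENNReal.mul_left_inj hμs_pos.ne' hμs_ne_top).mp (by simpa using h2)
    rw [hone, one_smul]
  have hmapres : ∀ σ, Measure.map (⇑(T σ)) (volume.restrict s) = volume.restrict s := by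
    intro σ
    have := Measure.restrict_map (μ := (volume : Measure (EuclideanSpace ℝ (Fin n))))
      (hTcont σ).measurable hs_meas
    rw [hmap σ, hTpre σ] at this
    exact this.symm
  have hCOV : ∀ (σ : Equiv.Perm (Fin (n+1))) (g : EuclideanSpace ℝ (Fin n) → ℝ),
      AEStronglyMeasurable g (volume.restrict s) →
      ∫ y in s, g (T σ y) = ∫ y in s, g y := by
    intro σ g hg
    have h1 : ∫ y, g y ∂(Measure.map (⇑(T σ)) (volume.restrict s))
        = ∫ y, g (T σ y) ∂(volume.restrict s) :=
      integral_map (hTcont σ).measurable.aemeasurable (by rwa [hmapres σ])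
    rw [hmapres σ] at h1
    exact h1.symm
  have hCOVint : ∀ (σ : Equiv.Perm (Fin (n+1))) (g : EuclideanSpace ℝ (Fin n) → ℝ),
      IntegrableOn g s → IntegrableOn (fun y => g (T σ y)) s := by
    intro σ g hg
    have := (integrable_map_measure (f := ⇑(T σ)) (g := g) (μ := volume.restrict s)
      (by rw [hmapres σ]; exact hg.aestronglyMeasurable)
      (hTcont σ).measurable.aemeasurable).mp (by rwa [hmapres σ])
    exact this
  have hcoordint : ∀ i, IntegrableOn (fun y => B.coord i y) s volume := fun i =>
    ((B.coord i).continuous_of_finiteDimensional).continuousOn.integrableOn_compact hs_compact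
  have hceq : ∀ i j, (∫ y in s, B.coord i y) = ∫ y in s, B.coord j y := by
    intro i j
    have h1 := hCOV (Equiv.swap i j) (fun y => B.coord i y)
      (hcoordint i).aestronglyMeasurable
    have h2 : ∀ y, B.coord i (T (Equiv.swap i j) y) = B.coord j y := by
      intro y
      rw [hcoordT]
      simp [AffineBasis.coords_apply, Equiv.swap_inv, Equiv.swap_apply_left]
    rw [← h1]
    exact integral_congr_ae (Filter.Eventually.of_forall fun y => (h2 y))
  have hcsum : ∑ i, (∫ y in s, B.coord i y) = (volume s).toReal := by
    rw [← integral_finset_sum _ (fun i _ => hcoordint i)]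
    have : ∀ y, ∑ i, B.coord i y = (1:ℝ) := fun y => B.sum_coord_apply_eq_one y
    rw [integral_congr_ae (Filter.Eventually.of_forall fun y => this y)]
    simp [Measure.restrict_apply_univ, measureReal_def]
  have hcval : ∀ i, (∫ y in s, B.coord i y) = (volume s).toReal / ((n:ℝ)+1) := by
    intro i
    have hall : ∀ j, (∫ y in s, B.coord j y) = ∫ y in s, B.coord i y := fun j => hceq j i
    have : ∑ j, (∫ y in s, B.coord j y) = ((n:ℝ)+1) * ∫ y in s, B.coord i y := by
      rw [Finset.sum_congr rfl (fun j _ => hall j)]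
      simp only [Finset.sum_const, Finset.card_univ, Fintype.card_fin, nsmul_eq_mul]
      push_cast
      ring
    rw [hcsum] at this
    field_simp
    linarith [this]
  -- right inequality ingredients
  have hrepr : ∀ y : EuclideanSpace ℝ (Fin n), y = ∑ i, B.coord i y • x i := by
    intro y
    have h1 := B.affineCombination_coord_eq_self y
    rw [Finset.affineCombination_eq_linear_combination _ _ _ (B.sum_coord_apply_eq_one y)] at h1
    exact h1.symm
  have hcoord_nonneg : ∀ y ∈ s, ∀ i, 0 ≤ B.coord i y := by
    intro y hy i
    have : y ∈ {z | ∀ i, 0 ≤ B.coord i z} := by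
      rw [← B.convexHull_eq_nonneg_coord]
      exact hy
    exact this i
  have hxmem : ∀ i, x i ∈ s := fun i => subset_convexHull ℝ _ (Set.mem_range_self i)
  have htoReal_pos : 0 < (volume s).toReal := ENNReal.toReal_pos hμs_pos.ne' hμs_ne_top
  constructor
  · -- left inequality
    set K : ℝ := ((n+1).factorial : ℝ) with hK
    have hKpos : 0 < K := by positivity
    have hwsum : ∑ _σ : Equiv.Perm (Fin (n+1)), K⁻¹ = 1 := by
      rw [Finset.sum_const, Finset.card_univ, Fintype.card_perm, Fintype.card_fin,
        nsmul_eq_mul, hK, mul_inv_cancel₀]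
      positivity
    have hbary : ∀ y ∈ s, (((n:ℝ)+1)⁻¹ • ∑ i, x i)
        = ∑ σ : Equiv.Perm (Fin (n+1)), K⁻¹ • T σ y := by
      intro y _
      have hTlin : ∀ σ : Equiv.Perm (Fin (n+1)), T σ y = ∑ j, B.coords y (σ⁻¹ j) • x j := by
        intro σ
        rw [hT_eq σ y]
        exact Finset.affineCombination_eq_linear_combination univ x (B.coords y ∘ ⇑σ⁻¹)
          (hsum1 σ y)
      have hswap : ∀ j j' : Fin (n+1),
          (∑ σ : Equiv.Perm (Fin (n+1)), B.coords y (σ j))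
            = ∑ σ : Equiv.Perm (Fin (n+1)), B.coords y (σ j') := by
        intro j j'
        refine Fintype.sum_equiv (Equiv.mulRight (Equiv.swap j j')) _ _ ?_
        intro τ
        simp [Equiv.Perm.mul_apply, Equiv.swap_apply_left]
      have hinvsum : ∀ j, (∑ σ : Equiv.Perm (Fin (n+1)), B.coords y (σ⁻¹ j))
          = ∑ σ : Equiv.Perm (Fin (n+1)), B.coords y (σ j) := by
        intro j
        exact Fintype.sum_equiv (Equiv.inv (Equiv.Perm (Fin (n+1)))) _ _ (fun σ => rfl)
      have htotal : ∑ j, (∑ σ : Equiv.Perm (Fin (n+1)), B.coords y (σ j)) = K := by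
        rw [Finset.sum_comm]
        have : ∀ σ : Equiv.Perm (Fin (n+1)), ∑ j, B.coords y (σ j) = 1 := by
          intro σ
          rw [Equiv.sum_comp σ (B.coords y)]
          exact B.sum_coord_apply_eq_one y
        rw [Finset.sum_congr rfl (fun σ _ => this σ)]
        simp [Finset.card_univ, Fintype.card_perm, hK]
      have hAval : ∀ j, (∑ σ : Equiv.Perm (Fin (n+1)), B.coords y (σ j)) = K / ((n:ℝ)+1) := by
        intro j
        have hconst : ∀ j', (∑ σ : Equiv.Perm (Fin (n+1)), B.coords y (σ j'))
            = ∑ σ : Equiv.Perm (Fin (n+1)), B.coords y (σ j) := fun j' => hswap j' j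
        have h2 : ∑ j', (∑ σ : Equiv.Perm (Fin (n+1)), B.coords y (σ j')) =
            ((n:ℝ)+1) * ∑ σ : Equiv.Perm (Fin (n+1)), B.coords y (σ j) := by
          rw [Finset.sum_congr rfl (fun j' _ => hconst j')]
          simp only [Finset.sum_const, Finset.card_univ, Fintype.card_fin, nsmul_eq_mul]
          push_cast
          ring
        rw [htotal] at h2
        have hnp : ((n:ℝ)+1) ≠ 0 := by positivity
        rw [eq_div_iff hnp]
        linarith [h2]
      calc (((n:ℝ)+1)⁻¹ • ∑ i, x i)
          = ∑ j, (K⁻¹ * (K / ((n:ℝ)+1))) • x j := by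
            rw [Finset.smul_sum]
            refine Finset.sum_congr rfl (fun j _ => ?_)
            congr 1
            field_simp
        _ = ∑ j, (K⁻¹ * ∑ σ : Equiv.Perm (Fin (n+1)), B.coords y (σ⁻¹ j)) • x j := by
            refine Finset.sum_congr rfl (fun j _ => ?_)
            rw [hinvsum j, hAval j]
        _ = ∑ σ : Equiv.Perm (Fin (n+1)), K⁻¹ • T σ y := by
            have hσ : ∀ σ : Equiv.Perm (Fin (n+1)),
                K⁻¹ • T σ y = ∑ j, (K⁻¹ * B.coords y (σ⁻¹ j)) • x j := by
              intro σ
              rw [hTlin σ, Finset.smul_sum]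
              exact Finset.sum_congr rfl (fun j _ => (smul_smul _ _ _))
            rw [Finset.sum_congr rfl (fun σ _ => hσ σ), Finset.sum_comm]
            refine Finset.sum_congr rfl (fun j _ => ?_)
            rw [Finset.mul_sum, Finset.sum_smul]
    have hmem : ∀ (σ : Equiv.Perm (Fin (n+1))) y, y ∈ s → T σ y ∈ s := by
      intro σ y hy
      rw [← hTs σ]
      exact Set.mem_image_of_mem _ hy
    have hjen : ∀ y ∈ s, f (((n:ℝ)+1)⁻¹ • ∑ i, x i)
        ≤ ∑ σ : Equiv.Perm (Fin (n+1)), K⁻¹ * f (T σ y) := by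
      intro y hy
      rw [hbary y hy]
      have h := ConvexOn.map_sum_le hf (t := (Finset.univ : Finset (Equiv.Perm (Fin (n+1)))))
        (w := fun _ => K⁻¹) (p := fun σ => T σ y)
        (fun _ _ => by positivity) hwsum (fun σ _ => hmem σ y hy)
      simpa [smul_eq_mul] using h
    have hintL : IntegrableOn (fun y => ∑ σ : Equiv.Perm (Fin (n+1)), K⁻¹ * f (T σ y)) s := by
      apply MeasureTheory.integrable_finset_sum
      intro σ _
      exact ((hCOVint σ f hint).const_mul _)
    have h1 := setIntegral_mono_on
      (integrableOn_const hs_compact.measure_lt_top.ne) hintL hs_meas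
      (fun y hy => hjen y hy)
    rw [setIntegral_const] at h1
    rw [integral_finset_sum _ (fun σ _ => (hCOVint σ f hint).const_mul _)] at h1
    have h2 : ∀ σ : Equiv.Perm (Fin (n+1)),
        (∫ y in s, K⁻¹ * f (T σ y)) = K⁻¹ * ∫ y in s, f y := by
      intro σ
      rw [integral_const_mul, hCOV σ f hint.aestronglyMeasurable]
    rw [Finset.sum_congr rfl (fun σ _ => h2 σ), ← Finset.sum_mul, hwsum, one_mul] at h1
    rw [setAverage_eq, smul_eq_mul, measureReal_def, le_inv_mul_iff₀ htoReal_pos]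
    rw [smul_eq_mul, measureReal_def] at h1
    linarith [h1]
  · -- right inequality
    have hpt : ∀ y ∈ s, f y ≤ ∑ i, B.coord i y * f (x i) := by
      intro y hy
      have h1 := ConvexOn.map_sum_le hf (t := Finset.univ)
        (fun i _ => hcoord_nonneg y hy i) (B.sum_coord_apply_eq_one y)
        (fun i _ => hxmem i)
      rw [← hrepr y] at h1
      simpa [smul_eq_mul] using h1
    have hintR : IntegrableOn (fun y => ∑ i, B.coord i y * f (x i)) s := by
      apply MeasureTheory.integrable_finset_sum
      intro i _
      exact (hcoordint i).mul_const _
    have hIle : (∫ y in s, f y) ≤ (volume s).toReal / ((n:ℝ)+1) * ∑ i, f (x i) := by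
      have h1 := setIntegral_mono_on hint hintR hs_meas hpt
      rw [integral_finset_sum _ (fun i _ => (hcoordint i).mul_const _)] at h1
      have h2 : ∀ i, (∫ y in s, B.coord i y * f (x i))
          = (volume s).toReal / ((n:ℝ)+1) * f (x i) := by
        intro i
        rw [integral_mul_const, hcval i]
      rw [Finset.sum_congr rfl (fun i _ => h2 i), ← Finset.mul_sum] at h1
      exact h1
    rw [setAverage_eq, smul_eq_mul, measureReal_def]
    have hinv : (0:ℝ) ≤ ((volume s).toReal)⁻¹ := by positivity
    calc (volume s).toReal⁻¹ * ∫ y in s, f y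
        ≤ (volume s).toReal⁻¹ * ((volume s).toReal / ((n:ℝ)+1) * ∑ i, f (x i)) :=
          mul_le_mul_of_nonneg_left hIle hinv
      _ = (∑ i, f (x i)) / ((n:ℝ)+1) := by
          field_simp
end

section
/- Let C be a cube in ℝ³, A a vertex of C, and S the union of the three faces of C not containing A. If f : C → ℝ is convex, then Avg(f, C) ≤ (1/4)·f(A) + (3/4)·Avg(f, S), where Avg(f, S) is the mean of f over S with respect to 2-dimensional surface measure. -/
open MeasureTheory Set Function
open scoped NNReal ENNReal

noncomputable section CubeAux

namespace CubeAux

abbrev E3 := EuclideanSpace ℝ (Fin 3)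
abbrev E2 := EuclideanSpace ℝ (Fin 2)

/-- identity map from pi space to `E3` -/
def toL3 : (Fin 3 → ℝ) → E3 := ⇑(MeasurableEquiv.toLp 2 (Fin 3 → ℝ)).symm.symm
def toL2 : (Fin 2 → ℝ) → E2 := ⇑(MeasurableEquiv.toLp 2 (Fin 2 → ℝ)).symm.symm

def C3 : Set E3 := {x | ∀ i, x i ∈ Icc (0:ℝ) 1}
def S3 : Set E3 := {x | (∀ i, x i ∈ Icc (0:ℝ) 1) ∧ ∃ i, x i = 1}
def B3 : Set (Fin 3 → ℝ) := Icc 0 1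
def Q2 : Set (Fin 2 → ℝ) := Icc 0 1
def Q2E : Set E2 := {y | ∀ k, y k ∈ Icc (0:ℝ) 1}

/-- the `i`-th far face of the cube -/
def F (i : Fin 3) : Set E3 := {x | x ∈ C3 ∧ x i = 1}

/-- the `i`-th pyramid (in pi coordinates) -/
def P (i : Fin 3) : Set (Fin 3 → ℝ) := {x | x ∈ B3 ∧ ∀ j, x j ≤ x i}

/-- isometric parametrization of the `i`-th face by `E2` -/
def emb (i : Fin 3) : E2 → E3 :=
  fun y => toL3 (i.insertNth 1 (fun k => y k))

lemma toL3_apply (v : Fin 3 → ℝ) (j : Fin 3) : toL3 v j = v j := rfl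
lemma toL2_apply (v : Fin 2 → ℝ) (k : Fin 2) : toL2 v k = v k := rfl

lemma emb_apply_self (i : Fin 3) (y : E2) : emb i y i = 1 := by
  simp [emb, toL3_apply]

lemma emb_apply_succAbove (i : Fin 3) (y : E2) (k : Fin 2) :
    emb i y (i.succAbove k) = y k := by
  simp [emb, toL3_apply]

lemma isometry_emb (i : Fin 3) : Isometry (emb i) := by
  refine Isometry.of_dist_eq fun y z => ?_
  rw [EuclideanSpace.dist_eq, EuclideanSpace.dist_eq]
  congr 1
  rw [Fin.sum_univ_succAbove _ i]
  simp [emb_apply_self, emb_apply_succAbove]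

lemma injective_emb (i : Fin 3) : Injective (emb i) := (isometry_emb i).injective

lemma measurableEmbedding_emb (i : Fin 3) : MeasurableEmbedding (emb i) :=
  (isometry_emb i).isClosedEmbedding.measurableEmbedding

lemma emb_preimage_F (i : Fin 3) : emb i ⁻¹' (F i) = Q2E := by
  ext y
  simp only [mem_preimage, F, C3, mem_setOf_eq, Q2E, emb_apply_self, and_true]
  constructor
  · intro h k
    simpa [emb_apply_succAbove] using h (i.succAbove k)
  · intro h j
    rcases eq_or_ne j i with rfl | hj
    · rw [emb_apply_self]; exact ⟨zero_le_one, le_refl 1⟩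
    · obtain ⟨k, rfl⟩ := Fin.exists_succAbove_eq hj
      rw [emb_apply_succAbove]; exact h k

lemma F_subset_range_emb (i : Fin 3) : F i ⊆ range (emb i) := by
  rintro x ⟨-, hx⟩
  refine ⟨toL2 (fun k => x (i.succAbove k)), PiLp.ext fun j => ?_⟩
  rcases eq_or_ne j i with rfl | hj
  · rw [emb_apply_self, hx]
  · obtain ⟨k, rfl⟩ := Fin.exists_succAbove_eq hj
    rw [emb_apply_succAbove, toL2_apply]

lemma emb_image_Q2E (i : Fin 3) : emb i '' Q2E = F i := by
  rw [← emb_preimage_F, image_preimage_eq_inter_range,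
    inter_eq_self_of_subset_left (F_subset_range_emb i)]

lemma C3_eq_preimage : C3 = (MeasurableEquiv.toLp 2 (Fin 3 → ℝ)).symm ⁻¹' B3 := by
  ext x
  simp [C3, B3, Pi.le_def, mem_Icc, forall_and, MeasurableEquiv.coe_toLp_symm]

lemma continuous_toL3 : Continuous toL3 :=
  PiLp.continuous_toLp 2 (fun _ : Fin 3 => ℝ)

lemma continuous_toL2 : Continuous toL2 :=
  PiLp.continuous_toLp 2 (fun _ : Fin 2 => ℝ)

lemma C3_eq_image : C3 = toL3 '' B3 := by
  rw [C3_eq_preimage]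
  ext x
  simp only [mem_preimage, mem_image]
  constructor
  · intro hx
    exact ⟨_, hx, (MeasurableEquiv.toLp 2 (Fin 3 → ℝ)).symm.symm_apply_apply x⟩
  · rintro ⟨v, hv, rfl⟩
    show (MeasurableEquiv.toLp 2 (Fin 3 → ℝ)).symm
      ((MeasurableEquiv.toLp 2 (Fin 3 → ℝ)).symm.symm v) ∈ B3
    rwa [MeasurableEquiv.apply_symm_apply]

lemma measurableSet_C3 : MeasurableSet C3 := by
  rw [C3_eq_preimage]
  exact (MeasurableEquiv.toLp 2 (Fin 3 → ℝ)).symm.measurable measurableSet_Icc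

lemma isCompact_C3 : IsCompact C3 := by
  rw [C3_eq_image]; exact isCompact_Icc.image continuous_toL3

lemma measurable_eval3 (i : Fin 3) : Measurable fun x : E3 => x i :=
  (measurable_pi_apply i).comp (MeasurableEquiv.toLp 2 (Fin 3 → ℝ)).symm.measurable

lemma measurableSet_F (i : Fin 3) : MeasurableSet (F i) :=
  measurableSet_C3.inter ((measurable_eval3 i) (measurableSet_singleton 1))

lemma Q2E_eq_preimage : Q2E = (MeasurableEquiv.toLp 2 (Fin 2 → ℝ)).symm ⁻¹' Q2 := by
  ext y
  simp [Q2E, Q2, Pi.le_def, mem_Icc, forall_and, MeasurableEquiv.coe_toLp_symm]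

lemma Q2E_eq_image : Q2E = toL2 '' Q2 := by
  rw [Q2E_eq_preimage]
  ext y
  simp only [mem_preimage, mem_image]
  constructor
  · intro hy
    exact ⟨_, hy, (MeasurableEquiv.toLp 2 (Fin 2 → ℝ)).symm.symm_apply_apply y⟩
  · rintro ⟨v, hv, rfl⟩
    show (MeasurableEquiv.toLp 2 (Fin 2 → ℝ)).symm
      ((MeasurableEquiv.toLp 2 (Fin 2 → ℝ)).symm.symm v) ∈ Q2
    rwa [MeasurableEquiv.apply_symm_apply]

lemma isCompact_Q2E : IsCompact Q2E := by
  rw [Q2E_eq_image]; exact isCompact_Icc.image continuous_toL2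

lemma measurableSet_Q2E : MeasurableSet Q2E := by
  rw [Q2E_eq_preimage]
  exact (MeasurableEquiv.toLp 2 (Fin 2 → ℝ)).symm.measurable measurableSet_Icc

lemma isCompact_F (i : Fin 3) : IsCompact (F i) := by
  rw [← emb_image_Q2E]
  exact isCompact_Q2E.image (isometry_emb i).continuous

lemma S3_eq_iUnion : S3 = ⋃ i, F i := by
  ext x
  simp [S3, F, C3, mem_iUnion, exists_and_left]

instance : Measure.IsAddHaarMeasure (μH[2] : Measure E2) := by
  have h : (2:ℝ) = Module.finrank ℝ E2 := by simp
  rw [h]; infer_instance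

/-- The scaling factor between Hausdorff measure and Lebesgue on the Euclidean plane. -/
def cH : ℝ≥0 := Measure.addHaarScalarFactor (μH[2] : Measure E2) volume

lemma hausdorff_eq_smul : (μH[2] : Measure E2) = cH • volume :=
  Measure.isAddLeftInvariant_eq_smul _ _

lemma hausdorff_eq_smul' : (μH[2] : Measure E2) = (cH : ℝ≥0∞) • volume := by
  rw [hausdorff_eq_smul]
  ext s hs
  rw [Measure.smul_apply, Measure.smul_apply, ENNReal.smul_def]

lemma cH_pos : 0 < cH :=
  Measure.addHaarScalarFactor_pos_of_isAddHaarMeasure _ _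

lemma map_emb_hausdorff (i : Fin 3) :
    Measure.map (emb i) (μH[2] : Measure E2) = (μH[2] : Measure E3).restrict (range (emb i)) := by
  ext A hA
  rw [(measurableEmbedding_emb i).map_apply, Measure.restrict_apply hA,
    ← (isometry_emb i).hausdorffMeasure_image (Or.inl (by norm_num)),
    image_preimage_eq_inter_range]

lemma volume_Q2 : (volume : Measure (Fin 2 → ℝ)) Q2 = 1 := by
  show (volume : Measure (Fin 2 → ℝ)) (Icc 0 1) = 1
  rw [← pi_univ_Icc, volume_pi_pi]
  simp

lemma volume_B3 : (volume : Measure (Fin 3 → ℝ)) B3 = 1 := by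
  show (volume : Measure (Fin 3 → ℝ)) (Icc 0 1) = 1
  rw [← pi_univ_Icc, volume_pi_pi]
  simp

lemma volume_Q2E : (volume : Measure E2) Q2E = 1 := by
  rw [Q2E_eq_preimage, show (Q2 : Set (Fin 2 → ℝ)) = Icc 0 1 from rfl,
    (EuclideanSpace.volume_preserving_symm_measurableEquiv_toLp (Fin 2)).measure_preimage
      measurableSet_Icc.nullMeasurableSet]
  exact volume_Q2

lemma volume_C3 : (volume : Measure E3) C3 = 1 := by
  rw [C3_eq_preimage, show (B3 : Set (Fin 3 → ℝ)) = Icc 0 1 from rfl,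
    (EuclideanSpace.volume_preserving_symm_measurableEquiv_toLp (Fin 3)).measure_preimage
      measurableSet_Icc.nullMeasurableSet]
  exact volume_B3

lemma hausdorff_F_eq (i : Fin 3) : (μH[2] : Measure E3) (F i) = (cH : ℝ≥0∞) := by
  rw [← emb_image_Q2E, (isometry_emb i).hausdorffMeasure_image (Or.inl (by norm_num)),
    hausdorff_eq_smul]
  rw [Measure.smul_apply, volume_Q2E, ENNReal.smul_def, smul_eq_mul, mul_one]

lemma hausdorff_F_inter (i j : Fin 3) (hij : i ≠ j) : (μH[2] : Measure E3) (F i ∩ F j) = 0 := by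
  obtain ⟨k, hk⟩ := Fin.exists_succAbove_eq (Ne.symm hij)
  have hsub : F i ∩ F j ⊆ emb i '' {y : E2 | y k = 1} := by
    rintro x ⟨hxi, hxj⟩
    obtain ⟨y, -, rfl⟩ : x ∈ emb i '' Q2E := (emb_image_Q2E i).symm ▸ hxi
    refine ⟨y, ?_, rfl⟩
    have h2 := hxj.2
    rw [← hk, emb_apply_succAbove] at h2
    exact h2
  refine measure_mono_null hsub ?_
  rw [(isometry_emb i).hausdorffMeasure_image (Or.inl (by norm_num)), hausdorff_eq_smul]
  have hv : (volume : Measure E2) {y : E2 | y k = 1} = 0 := by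
    have h0 : (volume : Measure (Fin 2 → ℝ)) ((fun v : Fin 2 → ℝ => v k) ⁻¹' {1}) = 0 := by
      rw [volume_pi]
      exact Measure.pi_hyperplane _ k 1
    calc (volume : Measure E2) {y : E2 | y k = 1}
        = volume ((MeasurableEquiv.toLp 2 (Fin 2 → ℝ)).symm ⁻¹'
            ((fun v : Fin 2 → ℝ => v k) ⁻¹' {1})) := rfl
      _ = volume ((fun v : Fin 2 → ℝ => v k) ⁻¹' {1}) :=
          (EuclideanSpace.volume_preserving_symm_measurableEquiv_toLp (Fin 2)).measure_preimage
            (((measurable_pi_apply k) (measurableSet_singleton 1)).nullMeasurableSet)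
      _ = 0 := h0
  simp [Measure.smul_apply, hv]

lemma F_subset_C3 (i : Fin 3) : F i ⊆ C3 := fun _ hx => hx.1

lemma integrableOn_hausdorff {f : E3 → ℝ} (hfc : ContinuousOn f C3) (i : Fin 3) :
    IntegrableOn f (F i) μH[2] := by
  obtain ⟨M, hM⟩ := (isCompact_F i).exists_bound_of_continuousOn (hfc.mono (F_subset_C3 i))
  refine ⟨(hfc.mono (F_subset_C3 i)).aestronglyMeasurable (measurableSet_F i), ?_⟩
  refine HasFiniteIntegral.restrict_of_bounded (C := M) ?_ ?_
  · rw [hausdorff_F_eq]; exact ENNReal.coe_lt_top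
  · exact (ae_restrict_iff' (measurableSet_F i)).2 (Filter.Eventually.of_forall hM)

lemma setIntegral_F (f : E3 → ℝ) (i : Fin 3) :
    ∫ x in F i, f x ∂μH[2] =
      cH.toReal * ∫ v in Q2, f (toL3 (i.insertNth 1 v)) := by
  have hrestr : (Measure.map (emb i) (μH[2] : Measure E2)).restrict (F i)
      = (μH[2] : Measure E3).restrict (F i) := by
    rw [map_emb_hausdorff, Measure.restrict_restrict (measurableSet_F i),
      inter_eq_self_of_subset_left (F_subset_range_emb i)]
  calc ∫ x in F i, f x ∂(μH[2] : Measure E3)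
      = ∫ x in F i, f x ∂(Measure.map (emb i) (μH[2] : Measure E2)) := by rw [hrestr]
    _ = ∫ y in emb i ⁻¹' (F i), f (emb i y) ∂(μH[2] : Measure E2) :=
        (measurableEmbedding_emb i).setIntegral_map _ _
    _ = ∫ y in Q2E, f (emb i y) ∂(μH[2] : Measure E2) := by rw [emb_preimage_F]
    _ = cH.toReal * ∫ y in Q2E, f (emb i y) ∂(volume : Measure E2) := by
        rw [hausdorff_eq_smul', Measure.restrict_smul, integral_smul_measure]
        simp
    _ = cH.toReal * ∫ v in Q2, f (toL3 (i.insertNth 1 v)) := by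
        have hmp := (EuclideanSpace.volume_preserving_symm_measurableEquiv_toLp (Fin 2)).symm
        rw [Q2E_eq_image, show toL2 = ⇑(MeasurableEquiv.toLp 2 (Fin 2 → ℝ)).symm.symm from rfl,
          hmp.setIntegral_image_emb (MeasurableEquiv.measurableEmbedding _) _ _]
        rfl

lemma hausdorff_S3 : (μH[2] : Measure E3) S3 = 3 * (cH : ℝ≥0∞) := by
  rw [S3_eq_iUnion, measure_iUnion₀
    (fun (i j : Fin 3) (hij : i ≠ j) => hausdorff_F_inter i j hij)
    (fun i : Fin 3 => (measurableSet_F i).nullMeasurableSet)]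
  simp only [hausdorff_F_eq, tsum_fintype, Finset.sum_const, Finset.card_univ,
    Fintype.card_fin, nsmul_eq_mul, Nat.cast_ofNat]

lemma setIntegral_S3 {f : E3 → ℝ} (hfc : ContinuousOn f C3) :
    ∫ x in S3, f x ∂μH[2] =
      cH.toReal * ∑ i : Fin 3, ∫ v in Q2, f (toL3 (i.insertNth 1 v)) := by
  rw [S3_eq_iUnion, integral_iUnion_ae
    (fun i : Fin 3 => (measurableSet_F i).nullMeasurableSet)
    (fun (i j : Fin 3) (hij : i ≠ j) => hausdorff_F_inter i j hij)
    (integrableOn_finite_iUnion.2 fun i : Fin 3 => integrableOn_hausdorff hfc i),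
    tsum_fintype, Finset.mul_sum]
  exact Finset.sum_congr rfl fun i _ => setIntegral_F f i

lemma average_S3 {f : E3 → ℝ} (hfc : ContinuousOn f C3) :
    ⨍ x in S3, f x ∂μH[2] =
      (∑ i : Fin 3, ∫ v in Q2, f (toL3 (i.insertNth 1 v))) / 3 := by
  rw [setAverage_eq, measureReal_def, hausdorff_S3, setIntegral_S3 hfc, smul_eq_mul]
  have hc : cH.toReal ≠ 0 := ne_of_gt (by exact_mod_cast cH_pos)
  rw [ENNReal.toReal_mul]
  simp only [ENNReal.toReal_ofNat, ENNReal.coe_toReal]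
  field_simp

/-! ### Volume side -/

lemma mem_B3 {x : Fin 3 → ℝ} : x ∈ B3 ↔ ∀ j, x j ∈ Icc (0:ℝ) 1 := by
  simp [B3, Pi.le_def, mem_Icc, forall_and]

lemma mem_Q2 {v : Fin 2 → ℝ} : v ∈ Q2 ↔ ∀ k, v k ∈ Icc (0:ℝ) 1 := by
  simp [Q2, Pi.le_def, mem_Icc, forall_and]

lemma continuousOn_comp_toL3 {f : E3 → ℝ} (hfc : ContinuousOn f C3) :
    ContinuousOn (fun v => f (toL3 v)) B3 := by
  refine hfc.comp continuous_toL3.continuousOn fun v hv => ?_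
  rw [C3_eq_image]
  exact mem_image_of_mem _ hv

lemma setIntegral_C3 (f : E3 → ℝ) :
    ∫ x in C3, f x = ∫ v in B3, f (toL3 v) := by
  have hmp := (EuclideanSpace.volume_preserving_symm_measurableEquiv_toLp (Fin 3)).symm
  rw [C3_eq_image, show toL3 = ⇑(MeasurableEquiv.toLp 2 (Fin 3 → ℝ)).symm.symm from rfl,
    hmp.setIntegral_image_emb (MeasurableEquiv.measurableEmbedding _) _ _]

lemma measurableSet_P (i : Fin 3) : MeasurableSet (P i) := by
  have h : P i = B3 ∩ ⋂ j, {x : Fin 3 → ℝ | x j ≤ x i} := by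
    ext x; simp [P, mem_iInter]
  rw [h]
  exact measurableSet_Icc.inter (MeasurableSet.iInter fun j =>
    measurableSet_le (measurable_pi_apply j) (measurable_pi_apply i))

lemma B3_eq_iUnion : B3 = ⋃ i, P i := by
  ext x
  simp only [mem_iUnion, P, mem_setOf_eq]
  constructor
  · intro hx
    obtain ⟨i, -, hi⟩ := Finset.exists_max_image Finset.univ x ⟨0, Finset.mem_univ 0⟩
    exact ⟨i, hx, fun j => hi j (Finset.mem_univ j)⟩
  · rintro ⟨i, hx, -⟩; exact hx

lemma volume_P_inter (i j : Fin 3) (hij : i ≠ j) :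
    (volume : Measure (Fin 3 → ℝ)) (P i ∩ P j) = 0 := by
  set N := LinearMap.ker ((LinearMap.proj i : (Fin 3 → ℝ) →ₗ[ℝ] ℝ) - LinearMap.proj j) with hN
  have hsub : P i ∩ P j ⊆ (N : Set (Fin 3 → ℝ)) := by
    rintro x ⟨⟨-, hxi⟩, ⟨-, hxj⟩⟩
    have hx : x i = x j := le_antisymm (hxj i) (hxi j)
    simp [hN, LinearMap.mem_ker, LinearMap.sub_apply, LinearMap.proj_apply, hx]
  refine measure_mono_null hsub (Measure.addHaar_submodule _ N fun htop => ?_)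
  have h1 : Pi.single i (1:ℝ) ∈ N := htop ▸ Submodule.mem_top
  simp [hN, LinearMap.mem_ker, LinearMap.sub_apply, LinearMap.proj_apply,
    Pi.single_eq_same, Pi.single_eq_of_ne (Ne.symm hij)] at h1

/-! ### The cone map and its Jacobian -/

def Ψm (i : Fin 3) (x : Fin 3 → ℝ) : Fin 3 → ℝ := fun j => if j = i then x i else x i * x j

def Mder (i : Fin 3) (x : Fin 3 → ℝ) : Matrix (Fin 3) (Fin 3) ℝ := fun j k =>
  if j = i then (if k = i then 1 else 0) else (if k = i then x j else if k = j then x i else 0)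

def Lder (i : Fin 3) (x : Fin 3 → ℝ) : (Fin 3 → ℝ) →L[ℝ] (Fin 3 → ℝ) :=
  LinearMap.toContinuousLinearMap (Matrix.toLin' (Mder i x))

lemma Lder_apply (i : Fin 3) (x h : Fin 3 → ℝ) (j : Fin 3) :
    Lder i x h j = if j = i then h i else x j * h i + x i * h j := by
  show (Matrix.toLin' (Mder i x)) h j = _
  rw [Matrix.toLin'_apply,
    show (Mder i x).mulVec h j = ∑ k, Mder i x j k * h k from rfl]
  rcases eq_or_ne j i with rfl | hj
  · simp [Mder, ite_mul, one_mul, zero_mul, Finset.sum_ite_eq']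
  · have hsplit : ∀ k, Mder i x j k * h k =
        (if k = i then x j * h k else 0) + (if k = j then x i * h k else 0) := by
      intro k
      rcases eq_or_ne k i with rfl | hk1
      · simp [Mder, hj, Ne.symm hj]
      · rcases eq_or_ne k j with rfl | hk2
        · simp [Mder, hj, hk1]
        · simp [Mder, hj, hk1, hk2]
    rw [if_neg hj, Finset.sum_congr rfl fun k _ => hsplit k, Finset.sum_add_distrib,
      Finset.sum_ite_eq' Finset.univ i, Finset.sum_ite_eq' Finset.univ j]
    simp

lemma det_Lder (i : Fin 3) (x : Fin 3 → ℝ) : (Lder i x).det = x i ^ 2 := by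
  have h1 : (Lder i x).det = LinearMap.det (Matrix.toLin' (Mder i x)) := rfl
  rw [h1, LinearMap.det_toLin']
  fin_cases i <;>
    · simp [Mder, Matrix.det_fin_three]
      ring

lemma hasFDerivAt_Psi (i : Fin 3) (x : Fin 3 → ℝ) : HasFDerivAt (Ψm i) (Lder i x) x := by
  apply hasFDerivAt_pi'.2
  intro j
  rcases eq_or_ne j i with rfl | hj
  · have h1 : (fun x : Fin 3 → ℝ => Ψm j x j) = fun x => x j := by
      funext y; simp [Ψm]
    have h2 : (ContinuousLinearMap.proj (R := ℝ) (φ := fun _ : Fin 3 => ℝ) j).comp (Lder j x)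
        = ContinuousLinearMap.proj j := by
      refine ContinuousLinearMap.ext fun h => ?_
      show Lder j x h j = h j
      simp [Lder_apply]
    rw [h1, h2]
    exact hasFDerivAt_apply j x
  · have h1 : (fun x : Fin 3 → ℝ => Ψm i x j) = fun x => x i * x j := by
      funext y; simp [Ψm, hj]
    have h2 : (ContinuousLinearMap.proj (R := ℝ) (φ := fun _ : Fin 3 => ℝ) j).comp (Lder i x)
        = x i • ContinuousLinearMap.proj j + x j • ContinuousLinearMap.proj i := by
      refine ContinuousLinearMap.ext fun h => ?_
      show Lder i x h j = _
      simp [Lder_apply, hj]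
      ring
    rw [h1, h2]
    exact (hasFDerivAt_apply i x).mul (hasFDerivAt_apply j x)

def sdom (i : Fin 3) : Set (Fin 3 → ℝ) := B3 ∩ {x | 0 < x i}

lemma measurableSet_sdom (i : Fin 3) : MeasurableSet (sdom i) :=
  measurableSet_Icc.inter ((measurable_pi_apply i) measurableSet_Ioi)

lemma injOn_Psi (i : Fin 3) : InjOn (Ψm i) (sdom i) := by
  rintro a ⟨-, ha⟩ b ⟨-, hb⟩ hab
  have hi : a i = b i := by
    have h := congrFun hab i
    simpa [Ψm] using h
  funext j
  rcases eq_or_ne j i with rfl | hj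
  · exact hi
  · have hj' := congrFun hab j
    simp only [Ψm, if_neg hj] at hj'
    rw [hi] at hj'
    exact mul_left_cancel₀ (ne_of_gt hb) hj'

lemma Psi_mem_B3 (i : Fin 3) {x : Fin 3 → ℝ} (hx : x ∈ B3) : Ψm i x ∈ B3 := by
  rw [mem_B3] at hx ⊢
  intro j
  rcases eq_or_ne j i with rfl | hj
  · simpa [Ψm] using hx j
  · have h1 := hx i
    have h2 := hx j
    simp only [Ψm, if_neg hj]
    exact ⟨mul_nonneg h1.1 h2.1, mul_le_one₀ h1.2 h2.1 h2.2⟩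

lemma image_Psi (i : Fin 3) : Ψm i '' sdom i = P i ∩ {y | 0 < y i} := by
  ext y
  constructor
  · rintro ⟨x, ⟨hxB, hxi⟩, rfl⟩
    have hxm := mem_B3.1 hxB
    refine ⟨⟨Psi_mem_B3 i hxB, fun j => ?_⟩, by simpa [Ψm] using hxi⟩
    rcases eq_or_ne j i with rfl | hj
    · exact le_refl _
    · simp only [Ψm, if_neg hj, if_pos rfl]
      calc x i * x j ≤ x i * 1 := mul_le_mul_of_nonneg_left (hxm j).2 (hxm i).1
        _ = x i := mul_one _
  · rintro ⟨⟨hyB, hymax⟩, hyi⟩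
    have hyi' : 0 < y i := hyi
    have hym := mem_B3.1 hyB
    refine ⟨fun j => if j = i then y i else y j / y i, ⟨mem_B3.2 fun j => ?_, ?_⟩, ?_⟩
    · rcases eq_or_ne j i with rfl | hj
      · rw [if_pos rfl]; exact hym j
      · rw [if_neg hj]
        exact ⟨div_nonneg (hym j).1 hyi'.le, (div_le_one hyi').2 (hymax j)⟩
    · show 0 < (if i = i then y i else y i / y i)
      rw [if_pos rfl]; exact hyi'
    · funext j
      rcases eq_or_ne j i with rfl | hj
      · show (if j = j then (if j = j then y j else y j / y j) else _) = y j
        rw [if_pos rfl, if_pos rfl]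
      · show (if j = i then _ else (if i = i then y i else y i / y i)
            * (if j = i then y i else y j / y i)) = y j
        rw [if_neg hj, if_pos rfl, if_neg hj, mul_comm,
          div_mul_cancel₀ _ (ne_of_gt hyi')]

lemma volume_hyperplane3 (i : Fin 3) (c : ℝ) :
    (volume : Measure (Fin 3 → ℝ)) {x | x i = c} = 0 := by
  rw [volume_pi]
  exact Measure.pi_hyperplane (μ := fun _ => (volume : Measure ℝ)) i c

lemma sdom_ae (i : Fin 3) : sdom i =ᵐ[(volume : Measure (Fin 3 → ℝ))] B3 := by
  rw [ae_eq_set]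
  constructor
  · have h : sdom i \ B3 = ∅ := by
      rw [diff_eq_empty]
      exact fun x hx => hx.1
    rw [h, measure_empty]
  · refine measure_mono_null (fun x hx => ?_) (volume_hyperplane3 i 0)
    obtain ⟨hxB, hxs⟩ := hx
    have h1 : ¬ (0 < x i) := fun h => hxs ⟨hxB, h⟩
    exact le_antisymm (not_lt.1 h1) ((mem_B3.1 hxB) i).1

lemma Pint_ae (i : Fin 3) :
    ((P i ∩ {y | 0 < y i} : Set (Fin 3 → ℝ))) =ᵐ[(volume : Measure (Fin 3 → ℝ))] P i := by
  rw [ae_eq_set]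
  constructor
  · have h : (P i ∩ {y | 0 < y i}) \ P i = ∅ := by
      rw [diff_eq_empty]
      exact fun x hx => hx.1
    rw [h, measure_empty]
  · refine measure_mono_null (fun x hx => ?_) (volume_hyperplane3 i 0)
    obtain ⟨hxP, hxs⟩ := hx
    have h1 : ¬ (0 < x i) := fun h => hxs ⟨hxP, h⟩
    exact le_antisymm (not_lt.1 h1) ((mem_B3.1 hxP.1) i).1

lemma continuous_Psi (i : Fin 3) : Continuous (Ψm i) := by
  apply continuous_pi
  intro j
  rcases eq_or_ne j i with rfl | hj
  · have h1 : (fun x : Fin 3 → ℝ => Ψm j x j) = fun x => x j := by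
      funext y; simp [Ψm]
    rw [h1]; exact continuous_apply j
  · have h1 : (fun x : Fin 3 → ℝ => Ψm i x j) = fun x => x i * x j := by
      funext y; simp [Ψm, hj]
    rw [h1]; exact (continuous_apply i).mul (continuous_apply j)

def upd (i : Fin 3) (x : Fin 3 → ℝ) : Fin 3 → ℝ := Function.update x i (1:ℝ)

lemma upd_eq_insertNth (i : Fin 3) (x : Fin 3 → ℝ) :
    upd i x = i.insertNth 1 (fun k => x (i.succAbove k)) := by
  funext j
  rcases eq_or_ne j i with rfl | hj
  · simp [upd]
  · obtain ⟨k, rfl⟩ := Fin.exists_succAbove_eq hj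
    simp [upd, Function.update_of_ne (Fin.succAbove_ne i k)]

lemma continuous_upd (i : Fin 3) : Continuous (upd i) := by
  apply continuous_pi
  intro j
  rcases eq_or_ne j i with rfl | hj
  · have h1 : (fun x : Fin 3 → ℝ => upd j x j) = fun _ => (1:ℝ) := by
      funext y; simp [upd]
    rw [h1]; exact continuous_const
  · have h1 : (fun x : Fin 3 → ℝ => upd i x j) = fun x => x j := by
      funext y; simp [upd, Function.update_of_ne hj]
    rw [h1]; exact continuous_apply j

lemma upd_mem_B3 (i : Fin 3) {x : Fin 3 → ℝ} (hx : x ∈ B3) : upd i x ∈ B3 := by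
  rw [mem_B3] at hx ⊢
  intro j
  rcases eq_or_ne j i with rfl | hj
  · simp [upd]
  · simpa [upd, Function.update_of_ne hj] using hx j

lemma Psi_decomp (i : Fin 3) (x : Fin 3 → ℝ) :
    Ψm i x = x i • upd i x + (1 - x i) • (0 : Fin 3 → ℝ) := by
  funext j
  rcases eq_or_ne j i with rfl | hj
  · simp [Ψm, upd]
  · simp [Ψm, hj, upd, Function.update_of_ne hj]

lemma toL3_smul_add (a b : ℝ) (v w : Fin 3 → ℝ) :
    toL3 (a • v + b • w) = a • toL3 v + b • toL3 w := rfl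

lemma toL3_zero : toL3 0 = (0 : E3) := rfl

lemma zero_mem_C3 : (0 : E3) ∈ C3 := by
  intro i
  show (0:ℝ) ∈ Icc (0:ℝ) 1
  exact ⟨le_refl 0, zero_le_one⟩

lemma convex_bound {f : E3 → ℝ} (hf : ConvexOn ℝ C3 f) (i : Fin 3) {x : Fin 3 → ℝ}
    (hx : x ∈ B3) :
    f (toL3 (Ψm i x)) ≤ x i * f (toL3 (upd i x)) + (1 - x i) * f 0 := by
  have h1 : toL3 (upd i x) ∈ C3 := by
    rw [C3_eq_image]; exact mem_image_of_mem _ (upd_mem_B3 i hx)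
  have hxi := (mem_B3.1 hx) i
  have h2 := hf.2 h1 zero_mem_C3 (hxi.1 : (0:ℝ) ≤ x i)
    (show (0:ℝ) ≤ 1 - x i by linarith [hxi.2]) (show x i + (1 - x i) = 1 by ring)
  calc f (toL3 (Ψm i x)) = f (x i • toL3 (upd i x) + (1 - x i) • (0:E3)) := by
        rw [Psi_decomp, toL3_smul_add, toL3_zero]
    _ ≤ x i * f (toL3 (upd i x)) + (1 - x i) * f 0 := by simpa using h2

/-! ### Splitting off one coordinate -/

lemma B3_split (i : Fin 3) :
    B3 = (MeasurableEquiv.piFinSuccAbove (fun _ => ℝ) i) ⁻¹' ((Icc (0:ℝ) 1) ×ˢ Q2) := by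
  ext x
  have he : (MeasurableEquiv.piFinSuccAbove (fun _ : Fin 3 => ℝ) i) x
      = (x i, fun k => x (i.succAbove k)) := rfl
  rw [mem_preimage, he, Set.mem_prod]
  simp only [mem_B3, mem_Q2]
  constructor
  · intro h
    exact ⟨h i, fun k => h _⟩
  · rintro ⟨h1, h2⟩ j
    rcases eq_or_ne j i with rfl | hj
    · exact h1
    · obtain ⟨k, rfl⟩ := Fin.exists_succAbove_eq hj
      exact h2 k

lemma setIntegral_B3_split (i : Fin 3) (φ : ℝ → ℝ) (ψ : (Fin 2 → ℝ) → ℝ) :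
    ∫ x in B3, φ (x i) * ψ (fun k => x (i.succAbove k)) =
      (∫ t in Icc (0:ℝ) 1, φ t) * ∫ v in Q2, ψ v := by
  have hmp := volume_preserving_piFinSuccAbove (fun _ : Fin 3 => ℝ) i
  have key := hmp.setIntegral_preimage_emb (MeasurableEquiv.measurableEmbedding _)
    (fun p : ℝ × (Fin 2 → ℝ) => φ p.1 * ψ p.2) ((Icc (0:ℝ) 1) ×ˢ Q2)
  rw [B3_split i]
  refine Eq.trans (Eq.trans ?_ key) ?_
  · rfl
  · rw [show (volume : Measure (ℝ × (Fin 2 → ℝ))) = (volume : Measure ℝ).prod volume from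
        Measure.volume_eq_prod _ _, ← Measure.prod_restrict, ← integral_prod_mul]

lemma integral_Icc_pow (n : ℕ) : ∫ t in Icc (0:ℝ) 1, t ^ n = ((n:ℝ) + 1)⁻¹ := by
  rw [integral_Icc_eq_integral_Ioc, ← intervalIntegral.integral_of_le zero_le_one,
    integral_pow]
  simp

lemma integral_Icc_sq_one_sub : ∫ t in Icc (0:ℝ) 1, t ^ 2 * (1 - t) = 1 / 12 := by
  have h : ∀ t : ℝ, t ^ 2 * (1 - t) = t ^ 2 - t ^ 3 := fun t => by ring
  simp_rw [h]
  rw [integral_sub ((continuous_pow 2).integrableOn_Icc) ((continuous_pow 3).integrableOn_Icc),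
    integral_Icc_pow 2, integral_Icc_pow 3]
  norm_num

/-! ### The pyramid bound -/

lemma pyramid_bound {f : E3 → ℝ} (hf : ConvexOn ℝ C3 f) (hfc : ContinuousOn f C3) (i : Fin 3) :
    ∫ x in P i, f (toL3 x) ≤
      (1/12) * f 0 + (1/4) * ∫ v in Q2, f (toL3 (i.insertNth 1 v)) := by
  have gcont : ContinuousOn (fun v => f (toL3 v)) B3 := continuousOn_comp_toL3 hfc
  have hBc : IsCompact B3 := isCompact_Icc
  have hmeas_s := measurableSet_sdom i
  have h1 : ∫ x in P i, f (toL3 x) = ∫ x in Ψm i '' sdom i, f (toL3 x) := by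
    rw [image_Psi]
    exact (setIntegral_congr_set (Pint_ae i)).symm
  have h2 : ∫ x in Ψm i '' sdom i, f (toL3 x)
      = ∫ x in sdom i, |(Lder i x).det| • f (toL3 (Ψm i x)) :=
    integral_image_eq_integral_abs_det_fderiv_smul (volume : Measure (Fin 3 → ℝ)) hmeas_s
      (fun x _ => (hasFDerivAt_Psi i x).hasFDerivWithinAt) (injOn_Psi i)
      (fun y => f (toL3 y))
  -- continuity and integrability of both sides
  have contL : ContinuousOn (fun x => |(Lder i x).det| • f (toL3 (Ψm i x))) B3 := by
    have hc : ContinuousOn (fun x => x i ^ 2 * f (toL3 (Ψm i x))) B3 :=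
      ((continuous_apply i).pow 2).continuousOn.mul
        (gcont.comp (continuous_Psi i).continuousOn fun x hx => Psi_mem_B3 i hx)
    refine hc.congr fun x _ => ?_
    rw [det_Lder, abs_of_nonneg (sq_nonneg _), smul_eq_mul]
  have intL_B3 : IntegrableOn (fun x => |(Lder i x).det| • f (toL3 (Ψm i x))) B3 :=
    contL.integrableOn_compact hBc
  have contR1 : ContinuousOn
      (fun x : Fin 3 → ℝ => x i ^ 3 * f (toL3 (i.insertNth 1 (fun k => x (i.succAbove k))))) B3 := by
    refine ((continuous_apply i).pow 3).continuousOn.mul ?_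
    refine (gcont.comp (continuous_upd i).continuousOn fun x hx => upd_mem_B3 i hx).congr ?_
    intro x _
    show f (toL3 (i.insertNth 1 fun k => x (i.succAbove k))) = f (toL3 (upd i x))
    rw [upd_eq_insertNth]
  have contR2 : ContinuousOn
      (fun x : Fin 3 → ℝ => (x i ^ 2 * (1 - x i)) * f 0) B3 :=
    (((continuous_apply i).pow 2).mul (continuous_const.sub (continuous_apply i))).continuousOn.mul
      continuousOn_const
  have intR1 : IntegrableOn
      (fun x : Fin 3 → ℝ => x i ^ 3 * f (toL3 (i.insertNth 1 (fun k => x (i.succAbove k))))) B3 :=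
    contR1.integrableOn_compact hBc
  have intR2 : IntegrableOn (fun x : Fin 3 → ℝ => (x i ^ 2 * (1 - x i)) * f 0) B3 :=
    contR2.integrableOn_compact hBc
  have intR_B3 : IntegrableOn
      (fun x : Fin 3 → ℝ => x i ^ 3 * f (toL3 (i.insertNth 1 (fun k => x (i.succAbove k))))
        + (x i ^ 2 * (1 - x i)) * f 0) B3 := intR1.add intR2
  -- pointwise bound on sdom
  have hpt : ∀ x ∈ sdom i, |(Lder i x).det| • f (toL3 (Ψm i x)) ≤
      x i ^ 3 * f (toL3 (i.insertNth 1 (fun k => x (i.succAbove k))))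
        + (x i ^ 2 * (1 - x i)) * f 0 := by
    intro x hx
    have hxB := hx.1
    have hcb := convex_bound hf i hxB
    rw [det_Lder, abs_of_nonneg (sq_nonneg _), smul_eq_mul, ← upd_eq_insertNth]
    calc x i ^ 2 * f (toL3 (Ψm i x))
        ≤ x i ^ 2 * (x i * f (toL3 (upd i x)) + (1 - x i) * f 0) :=
          mul_le_mul_of_nonneg_left hcb (sq_nonneg _)
      _ = x i ^ 3 * f (toL3 (upd i x)) + (x i ^ 2 * (1 - x i)) * f 0 := by ring
  have hmono := setIntegral_mono_on (intL_B3.mono_set inter_subset_left)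
    (intR_B3.mono_set inter_subset_left) hmeas_s hpt
  have h3 : ∫ x in sdom i, (x i ^ 3 * f (toL3 (i.insertNth 1 (fun k => x (i.succAbove k))))
        + (x i ^ 2 * (1 - x i)) * f 0)
      = ∫ x in B3, (x i ^ 3 * f (toL3 (i.insertNth 1 (fun k => x (i.succAbove k))))
        + (x i ^ 2 * (1 - x i)) * f 0) := setIntegral_congr_set (sdom_ae i)
  have e1 : ∫ x in B3, x i ^ 3 * f (toL3 (i.insertNth 1 (fun k => x (i.succAbove k))))
      = (∫ t in Icc (0:ℝ) 1, t ^ 3) * ∫ v in Q2, f (toL3 (i.insertNth 1 v)) :=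
    setIntegral_B3_split i (fun t => t ^ 3) (fun v => f (toL3 (i.insertNth 1 v)))
  have e2 : ∫ x in B3, (x i ^ 2 * (1 - x i)) * f 0
      = (∫ t in Icc (0:ℝ) 1, t ^ 2 * (1 - t)) * ∫ v in Q2, (fun _ => f 0) v :=
    setIntegral_B3_split i (fun t => t ^ 2 * (1 - t)) (fun _ => f 0)
  have e3 : ∫ v in Q2, (fun _ => f 0) v = f 0 := by
    rw [setIntegral_const, measureReal_def, volume_Q2]
    simp
  have h4 : ∫ x in B3, (x i ^ 3 * f (toL3 (i.insertNth 1 (fun k => x (i.succAbove k))))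
        + (x i ^ 2 * (1 - x i)) * f 0)
      = (1/4) * (∫ v in Q2, f (toL3 (i.insertNth 1 v))) + (1/12) * f 0 := by
    rw [integral_add intR1 intR2, e1, e2, e3, integral_Icc_pow 3, integral_Icc_sq_one_sub]
    norm_num
  rw [h1, h2]
  calc ∫ x in sdom i, |(Lder i x).det| • f (toL3 (Ψm i x))
      ≤ ∫ x in sdom i, (x i ^ 3 * f (toL3 (i.insertNth 1 (fun k => x (i.succAbove k))))
          + (x i ^ 2 * (1 - x i)) * f 0) := hmono
    _ = (1/4) * (∫ v in Q2, f (toL3 (i.insertNth 1 v))) + (1/12) * f 0 := by rw [h3, h4]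
    _ = (1/12) * f 0 + (1/4) * ∫ v in Q2, f (toL3 (i.insertNth 1 v)) := by ring

lemma volume_side {f : E3 → ℝ} (hf : ConvexOn ℝ C3 f) (hfc : ContinuousOn f C3) :
    ∫ x in C3, f x ≤
      (1/4) * f 0 + (1/4) * ∑ i : Fin 3, ∫ v in Q2, f (toL3 (i.insertNth 1 v)) := by
  rw [setIntegral_C3]
  have hsum : ∫ v in B3, f (toL3 v) = ∑ i : Fin 3, ∫ x in P i, f (toL3 x) := by
    rw [B3_eq_iUnion, integral_iUnion_ae (fun i : Fin 3 => (measurableSet_P i).nullMeasurableSet)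
      (fun (i j : Fin 3) (hij : i ≠ j) => volume_P_inter i j hij)
      (by rw [← B3_eq_iUnion]
          exact (continuousOn_comp_toL3 hfc).integrableOn_compact isCompact_Icc),
      tsum_fintype]
  rw [hsum]
  have hb := Finset.sum_le_sum (fun i (_ : i ∈ Finset.univ) => pyramid_bound hf hfc i)
  refine le_trans hb (le_of_eq ?_)
  rw [Finset.sum_add_distrib, Finset.sum_const, ← Finset.mul_sum]
  simp only [Finset.card_univ, Fintype.card_fin, nsmul_eq_mul, Nat.cast_ofNat]
  ring

end CubeAux

end CubeAux

open CubeAux in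
theorem cube_vertex_far_faces_bound (f : EuclideanSpace ℝ (Fin 3) → ℝ)
    (hf : ConvexOn ℝ {x : EuclideanSpace ℝ (Fin 3) | ∀ i, x i ∈ Set.Icc (0 : ℝ) 1} f)
    (hfc : ContinuousOn f
      {x : EuclideanSpace ℝ (Fin 3) | ∀ i, x i ∈ Set.Icc (0 : ℝ) 1}) :
    ⨍ y in {x : EuclideanSpace ℝ (Fin 3) | ∀ i, x i ∈ Set.Icc (0 : ℝ) 1}, f y ≤
      (1 / 4) * f 0 +
        (3 / 4) *
          ⨍ y in {x : EuclideanSpace ℝ (Fin 3) |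
            (∀ i, x i ∈ Set.Icc (0 : ℝ) 1) ∧ ∃ i, x i = 1}, f y ∂μH[2] := by
  have hfC : ConvexOn ℝ C3 f := hf
  have hfcC : ContinuousOn f C3 := hfc
  have h1 : ⨍ y in {x : EuclideanSpace ℝ (Fin 3) | ∀ i, x i ∈ Set.Icc (0 : ℝ) 1}, f y
      = ∫ x in C3, f x := by
    rw [show {x : EuclideanSpace ℝ (Fin 3) | ∀ i, x i ∈ Set.Icc (0 : ℝ) 1} = C3 from rfl,
      setAverage_eq, measureReal_def, volume_C3]
    simp
  have h2 : ⨍ y in {x : EuclideanSpace ℝ (Fin 3) |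
        (∀ i, x i ∈ Set.Icc (0 : ℝ) 1) ∧ ∃ i, x i = 1}, f y ∂μH[2]
      = (∑ i : Fin 3, ∫ v in Q2, f (toL3 (i.insertNth 1 v))) / 3 := by
    rw [show {x : EuclideanSpace ℝ (Fin 3) |
        (∀ i, x i ∈ Set.Icc (0 : ℝ) 1) ∧ ∃ i, x i = 1} = S3 from rfl]
    exact average_S3 hfcC
  rw [h1, h2]
  have h3 := volume_side hfC hfcC
  linarith [h3]
end
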